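/- arXiv:2310.03530 — 3 statements merged into one kernel-verified Lean document; each statement's English description precedes it below -/
import Mathlib

section
/- Let G be a group acting on measure spaces X and Ξ with invariant measures, let π and π̂ denote the left-regular representations of G on L²(X) and L²(Ξ) respectively (πg[f](x) = f(g⁻¹·x), π̂g[γ](ξ) = γ(g⁻¹·ξ)), and let ψ be a joint G-invariant function on X × Ξ. Then the ridgelet transform R_ψ[f](ξ) := ∫_X f(x) conj(ψ(x,ξ)) dx intertwines π and π̂: R_ψ ∘ πg = π̂g ∘ R_ψ for all g ∈ G. -/
open MeasureTheory

/-- The ridgelet transform `R_ψ[f](ξ) = ∫_X f(x) conj(ψ(x,ξ)) dx` induced by a joint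
    `G`-invariant function `ψ` intertwines the regular representations:
    `R_ψ[π_g f] = π̂_g [R_ψ f]`, i.e. `R_ψ[f(g⁻¹·)] (ξ) = R_ψ[f] (g⁻¹·ξ)`. -/
theorem ridgelet_intertwines {G X Ξ : Type*} [Group G] [MulAction G X] [MulAction G Ξ]
    [MeasurableSpace X] (μ : Measure X)
    (hμ : ∀ g : G, MeasurePreserving (fun x : X => g • x) μ μ)
    (ψ : X → Ξ → ℂ)
    (hψ : ∀ (g : G) (x : X) (ξ : Ξ), ψ (g • x) (g • ξ) = ψ x ξ)
    (f : X → ℂ)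
    (hf : ∀ ξ : Ξ, Integrable (fun x => f x * (starRingEnd ℂ) (ψ x ξ)) μ)
    (g : G) (ξ : Ξ) :
    ∫ x, f (g⁻¹ • x) * (starRingEnd ℂ) (ψ x ξ) ∂μ
      = ∫ x, f x * (starRingEnd ℂ) (ψ x (g⁻¹ • ξ)) ∂μ := by
  let e : X ≃ᵐ X :=
    { toFun := fun x => g • x
      invFun := fun x => g⁻¹ • x
      left_inv := fun x => by simp
      right_inv := fun x => by simp
      measurable_toFun := (hμ g).measurable
      measurable_invFun := (hμ g⁻¹).measurable }
  have he : ∀ x, e x = g • x := fun _ => rfl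
  have hpres : MeasurePreserving (⇑e) μ μ := by
    simpa [funext he] using hμ g
  calc ∫ x, f (g⁻¹ • x) * (starRingEnd ℂ) (ψ x ξ) ∂μ
      = ∫ x, f (g⁻¹ • (e x)) * (starRingEnd ℂ) (ψ (e x) ξ) ∂μ :=
        (hpres.integral_comp e.measurableEmbedding
          (fun x => f (g⁻¹ • x) * (starRingEnd ℂ) (ψ x ξ))).symm
    _ = ∫ x, f x * (starRingEnd ℂ) (ψ x (g⁻¹ • ξ)) ∂μ := by
        refine integral_congr_ae (Filter.Eventually.of_forall fun x => ?_)
        have : ψ (g • x) ξ = ψ x (g⁻¹ • ξ) := by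
          conv_rhs => rw [← hψ g x (g⁻¹ • ξ), smul_inv_smul]
        simp [he, this]
end

section
/- Let σ ∈ L²(ℝ) (or a measurable function with appropriate integrability) and define the regular representation of Aff(m) on L²(ℝᵐ) by π(g)[f](x) = |det L|^{-1/2} f(L⁻¹(x−t)) for g = (L,t), and on L²(ℝᵐ×ℝ) by π̂(g)[γ](a,b) = |det L|^{1/2} γ(Lᵀa, b − a·t). Then the ridgelet transform R_ρ[f](a,b) = ∫ f(x) conj(ρ(a·x − b)) dx satisfies R_ρ ∘ π(g) = π̂(g) ∘ R_ρ for all g ∈ Aff(m), for all f for which the integrals converge. -/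
open Matrix MeasureTheory

/-- The ridgelet transform `R_ρ[f](a,b) = ∫ f(x) conj(ρ(a·x−b)) dx` intertwines the
    regular representations `π(g)f(x) = |det L|^{-1/2} f(L⁻¹(x−t))` and
    `π̂(g)γ(a,b) = |det L|^{1/2} γ(Lᵀa, b − a·t)` of the affine group:
    `R_ρ[π(g)f] = π̂(g)[R_ρ f]`. -/
theorem ridgelet_intertwines_affine {m : ℕ} (ρ : ℝ → ℂ) (f : (Fin m → ℝ) → ℂ)
    (L : GL (Fin m) ℝ) (t : Fin m → ℝ)
    (hf : ∀ (a : Fin m → ℝ) (b : ℝ),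
      Integrable (fun x : Fin m → ℝ => f x * (starRingEnd ℂ) (ρ (a ⬝ᵥ x - b))))
    (hf' : ∀ (a : Fin m → ℝ) (b : ℝ),
      Integrable (fun x : Fin m → ℝ =>
        f (((L⁻¹ : GL (Fin m) ℝ) : Matrix (Fin m) (Fin m) ℝ) *ᵥ (x - t)) *
          (starRingEnd ℂ) (ρ (a ⬝ᵥ x - b))))
    (a : Fin m → ℝ) (b : ℝ) :
    ∫ x : Fin m → ℝ,
        ((Real.sqrt |(L : Matrix (Fin m) (Fin m) ℝ).det| : ℂ))⁻¹ *
          f (((L⁻¹ : GL (Fin m) ℝ) : Matrix (Fin m) (Fin m) ℝ) *ᵥ (x - t)) *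
          (starRingEnd ℂ) (ρ (a ⬝ᵥ x - b))
      = (Real.sqrt |(L : Matrix (Fin m) (Fin m) ℝ).det| : ℂ) *
          ∫ x : Fin m → ℝ,
            f x * (starRingEnd ℂ)
              (ρ (((L : Matrix (Fin m) (Fin m) ℝ)ᵀ *ᵥ a) ⬝ᵥ x - (b - a ⬝ᵥ t))) := by
  set M : Matrix (Fin m) (Fin m) ℝ := (L : Matrix (Fin m) (Fin m) ℝ) with hM
  set N : Matrix (Fin m) (Fin m) ℝ := ((L⁻¹ : GL (Fin m) ℝ) : Matrix (Fin m) (Fin m) ℝ) with hN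
  have hMN : M * N = 1 := by
    rw [hM, hN]
    exact L.mul_inv
  have hdet : M.det ≠ 0 := by
    intro h
    have : (M * N).det = 0 := by rw [det_mul, h, zero_mul]
    rw [hMN, det_one] at this
    exact one_ne_zero this
  have hdetN : N.det = M.det⁻¹ := by
    have : M.det * N.det = 1 := by rw [← det_mul, hMN, det_one]
    field_simp at this ⊢
    linarith [this]
  have hdN : N.det ≠ 0 := by rw [hdetN]; exact inv_ne_zero hdet
  -- the target integrand on the right, as a function
  set h : (Fin m → ℝ) → ℂ := fun y =>
    f y * (starRingEnd ℂ) (ρ ((Mᵀ *ᵥ a) ⬝ᵥ y - (b - a ⬝ᵥ t))) with hh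
  have hint : Integrable h := hf (Mᵀ *ᵥ a) (b - a ⬝ᵥ t)
  -- Step 0: pull out the constant
  simp_rw [mul_assoc]
  rw [integral_const_mul]
  -- Step 1: translation change of variables
  have step1 : (∫ x : Fin m → ℝ,
      f (N *ᵥ (x - t)) * (starRingEnd ℂ) (ρ (a ⬝ᵥ x - b)))
      = ∫ x : Fin m → ℝ, h (N *ᵥ x) := by
    rw [← integral_add_right_eq_self
      (fun x => f (N *ᵥ (x - t)) * (starRingEnd ℂ) (ρ (a ⬝ᵥ x - b))) t]
    congr 1
    funext x
    have h1 : x + t - t = x := by abel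
    have h2 : (Mᵀ *ᵥ a) ⬝ᵥ (N *ᵥ x) = a ⬝ᵥ (x + t) - a ⬝ᵥ t := by
      rw [dotProduct_mulVec, mulVec_transpose, vecMul_vecMul, hMN, vecMul_one,
        dotProduct_add]
      ring
    simp only [h1, hh, h2]
    ring_nf
  rw [step1]
  -- Step 2: linear change of variables
  have hmap : Measure.map (Matrix.toLin' N) volume
      = ENNReal.ofReal |N.det⁻¹| • volume :=
    Real.map_matrix_volume_pi_eq_smul_volume_pi hdN
  have hmeas : AEMeasurable (Matrix.toLin' N) (volume : Measure (Fin m → ℝ)) :=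
    (Matrix.toLin' N).continuous_of_finiteDimensional.measurable.aemeasurable
  have hsm : AEStronglyMeasurable h (Measure.map (Matrix.toLin' N) volume) := by
    rw [hmap]
    exact hint.aestronglyMeasurable.mono_ac (Measure.smul_absolutelyContinuous)
  have step2 : (∫ x : Fin m → ℝ, h (N *ᵥ x)) = |M.det| • ∫ y, h y := by
    have : (∫ x : Fin m → ℝ, h (N *ᵥ x))
        = ∫ y, h y ∂(Measure.map (Matrix.toLin' N) volume) := by
      rw [integral_map hmeas hsm]
      simp [Matrix.toLin'_apply]
    rw [this, hmap, integral_smul_measure, ENNReal.toReal_ofReal (by positivity)]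
    congr 2
    rw [hdetN, inv_inv]
  rw [step2]
  -- Step 3: the scalar identity
  have hd0 : (0:ℝ) < |M.det| := abs_pos.mpr hdet
  have hsq : Real.sqrt |M.det| * Real.sqrt |M.det| = |M.det| :=
    Real.mul_self_sqrt (le_of_lt hd0)
  have hsqne : (Real.sqrt |M.det| : ℂ) ≠ 0 := by
    simp only [ne_eq, Complex.ofReal_eq_zero]
    positivity
  rw [Complex.real_smul,
    show ((|M.det| : ℝ) : ℂ) = (Real.sqrt |M.det| : ℂ) * (Real.sqrt |M.det| : ℂ) by
      rw [← Complex.ofReal_mul, hsq]]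
  field_simp
end

section
/- Define the integral representation network S_σ[γ](x) = ∫_{ℝᵐ×ℝ} γ(a,b) σ(a·x−b) da db and the representations π(g)[f](x) = |det L|^{-1/2} f(L⁻¹(x−t)), π̂(g)[γ](a,b) = |det L|^{1/2} γ(Lᵀa, b − a·t) for g = (L,t) ∈ Aff(m). Then S_σ ∘ π̂(g) = π(g) ∘ S_σ for all g ∈ Aff(m), for all γ for which the integrals converge. -/
open Matrix MeasureTheory

lemma integral_comp_mulVec {m : ℕ} (M : Matrix (Fin m) (Fin m) ℝ) (hM : M.det ≠ 0)
    (f : (Fin m → ℝ) → ℂ) (hf : AEStronglyMeasurable f volume) :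
    ∫ a, f (M *ᵥ a) = |M.det|⁻¹ • ∫ a, f a := by
  have hcont : Continuous (Matrix.toLin' M) := LinearMap.continuous_on_pi _
  have hmap := Real.map_matrix_volume_pi_eq_smul_volume_pi hM
  have hf' : AEStronglyMeasurable f (Measure.map (Matrix.toLin' M) volume) := by
    rw [hmap]; exact hf.mono_ac MeasureTheory.Measure.smul_absolutelyContinuous
  have h1 : ∫ a, f (Matrix.toLin' M a) = ∫ a, f a ∂(Measure.map (Matrix.toLin' M) volume) :=
    (integral_map hcont.measurable.aemeasurable hf').symm
  simp only [Matrix.toLin'_apply] at h1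
  rw [h1, hmap, integral_smul_measure, ENNReal.toReal_ofReal (by positivity), abs_inv]

/-- The network operator `S_σ[γ](x) = ∫ γ(a,b) σ(a·x−b) da db` intertwines
    `π̂(g)γ(a,b) = |det L|^{1/2} γ(Lᵀa, b − a·t)` and
    `π(g)f(x) = |det L|^{-1/2} f(L⁻¹(x−t))`: `S_σ[π̂(g)γ] = π(g)[S_σ γ]`. -/
theorem network_intertwines_affine {m : ℕ} (σ : ℝ → ℂ)
    (γ : ((Fin m → ℝ) × ℝ) → ℂ) (L : GL (Fin m) ℝ) (t : Fin m → ℝ)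
    (hγ : ∀ x : Fin m → ℝ,
      Integrable (fun p : (Fin m → ℝ) × ℝ => γ p * σ (p.1 ⬝ᵥ x - p.2)))
    (hγ' : ∀ x : Fin m → ℝ,
      Integrable (fun p : (Fin m → ℝ) × ℝ =>
        γ ((L : Matrix (Fin m) (Fin m) ℝ)ᵀ *ᵥ p.1, p.2 - p.1 ⬝ᵥ t) *
          σ (p.1 ⬝ᵥ x - p.2)))
    (x : Fin m → ℝ) :
    ∫ p : (Fin m → ℝ) × ℝ,
        (Real.sqrt |(L : Matrix (Fin m) (Fin m) ℝ).det| : ℂ) *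
          γ ((L : Matrix (Fin m) (Fin m) ℝ)ᵀ *ᵥ p.1, p.2 - p.1 ⬝ᵥ t) *
          σ (p.1 ⬝ᵥ x - p.2)
      = ((Real.sqrt |(L : Matrix (Fin m) (Fin m) ℝ).det| : ℂ))⁻¹ *
          ∫ p : (Fin m → ℝ) × ℝ,
            γ p * σ (p.1 ⬝ᵥ
              (((L⁻¹ : GL (Fin m) ℝ) : Matrix (Fin m) (Fin m) ℝ) *ᵥ (x - t)) - p.2) := by
  set M : Matrix (Fin m) (Fin m) ℝ := (L : Matrix (Fin m) (Fin m) ℝ) with hMdef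
  set y : Fin m → ℝ := ((L⁻¹ : GL (Fin m) ℝ) : Matrix (Fin m) (Fin m) ℝ) *ᵥ (x - t) with hy
  have hdet : M.det ≠ 0 := by
    have : IsUnit M.det := (Matrix.isUnit_iff_isUnit_det M).mp L.isUnit
    exact this.ne_zero
  have hdetT : Mᵀ.det ≠ 0 := by rw [Matrix.det_transpose]; exact hdet
  have hdot : ∀ a : Fin m → ℝ, (Mᵀ *ᵥ a) ⬝ᵥ y = a ⬝ᵥ x - a ⬝ᵥ t := by
    intro a
    have h1 : (Mᵀ *ᵥ a) ⬝ᵥ y = a ⬝ᵥ (M *ᵥ y) := by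
      rw [Matrix.mulVec_transpose, ← Matrix.dotProduct_mulVec]
    have h2 : M *ᵥ y = x - t := by
      rw [hy, Matrix.mulVec_mulVec]
      have hone : M * ((L⁻¹ : GL (Fin m) ℝ) : Matrix (Fin m) (Fin m) ℝ) = 1 := L.mul_inv
      rw [hone, Matrix.one_mulVec]
    rw [h1, h2, dotProduct_sub]
  -- integrability
  have hI1 : Integrable (fun p : (Fin m → ℝ) × ℝ =>
      γ (Mᵀ *ᵥ p.1, p.2 - p.1 ⬝ᵥ t) * σ (p.1 ⬝ᵥ x - p.2)) (volume.prod volume) := by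
    rw [← MeasureTheory.Measure.volume_eq_prod]; exact hγ' x
  have hI2 : Integrable (fun p : (Fin m → ℝ) × ℝ =>
      γ p * σ (p.1 ⬝ᵥ y - p.2)) (volume.prod volume) := by
    rw [← MeasureTheory.Measure.volume_eq_prod]; exact hγ y
  have hG : AEStronglyMeasurable
      (fun c : Fin m → ℝ => ∫ b : ℝ, γ (c, b) * σ (c ⬝ᵥ y - b)) volume :=
    hI2.integral_prod_left.aestronglyMeasurable
  have key : ∫ p : (Fin m → ℝ) × ℝ, γ (Mᵀ *ᵥ p.1, p.2 - p.1 ⬝ᵥ t) * σ (p.1 ⬝ᵥ x - p.2)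
      = |M.det|⁻¹ • ∫ p : (Fin m → ℝ) × ℝ, γ p * σ (p.1 ⬝ᵥ y - p.2) := by
    rw [MeasureTheory.Measure.volume_eq_prod, integral_prod _ hI1, integral_prod _ hI2]
    have step1 : ∀ a : Fin m → ℝ,
        (∫ b : ℝ, γ (Mᵀ *ᵥ a, b - a ⬝ᵥ t) * σ (a ⬝ᵥ x - b))
          = ∫ b : ℝ, γ (Mᵀ *ᵥ a, b) * σ ((Mᵀ *ᵥ a) ⬝ᵥ y - b) := by
      intro a
      rw [← integral_sub_right_eq_self
        (fun b => γ (Mᵀ *ᵥ a, b) * σ ((Mᵀ *ᵥ a) ⬝ᵥ y - b)) (a ⬝ᵥ t)]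
      congr 1 with b
      rw [hdot a]
      ring_nf
    calc ∫ a : Fin m → ℝ, ∫ b : ℝ, γ (Mᵀ *ᵥ a, b - a ⬝ᵥ t) * σ (a ⬝ᵥ x - b)
        = ∫ a : Fin m → ℝ, ∫ b : ℝ, γ (Mᵀ *ᵥ a, b) * σ ((Mᵀ *ᵥ a) ⬝ᵥ y - b) := by
          simp_rw [step1]
      _ = |Mᵀ.det|⁻¹ • ∫ c : Fin m → ℝ, ∫ b : ℝ, γ (c, b) * σ (c ⬝ᵥ y - b) :=
          integral_comp_mulVec Mᵀ hdetT _ hG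
      _ = |M.det|⁻¹ • ∫ c : Fin m → ℝ, ∫ b : ℝ, γ (c, b) * σ (c ⬝ᵥ y - b) := by
          rw [Matrix.det_transpose]
  simp_rw [mul_assoc]
  rw [MeasureTheory.integral_const_mul, key]
  have hs : (0:ℝ) < Real.sqrt |M.det| := Real.sqrt_pos.mpr (abs_pos.mpr hdet)
  have hsq : Real.sqrt |M.det| * Real.sqrt |M.det| = |M.det| :=
    Real.mul_self_sqrt (abs_nonneg _)
  rw [Complex.real_smul, ← hsq]
  have hsC : (Real.sqrt |M.det| : ℂ) ≠ 0 := by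
    exact_mod_cast ne_of_gt hs
  push_cast
  field_simp
  rw [Real.sqrt_sq hs.le]
  field_simp
end
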